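/- Let t, μ ∈ ℝ and consider λ ∈ ℝ with λ + μ > 0. Define V_{−1}(λ) = (λ+μ)·log(λ+μ) − (λ+μ), V_0(λ) = −(t/2)·log(λ+μ), and V_m(λ) = (B_{m+1}((t+1)/2)/(m(m+1)))·(λ+μ)^{−m} for m ≥ 1. Then for every integer n ≥ 0 and every λ with λ+μ > 0, Σ_{k=1}^{n+1} (1/k!) · V_{n−k}^{(k)}(λ) = (((1−t)/2)^n / n!) · L^{(n)}(λ), where L(λ) = log(λ+μ). (That is, the formal series V(λ;ℏ) = Σ_{m≥−1} ℏ^m V_m(λ) solves (e^{ℏ ∂_λ} − 1) V(λ) = e^{(1−t)ℏ∂_λ/2} log(λ+μ) order by order in ℏ.) -/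

import Mathlib

lemma bern_reflect (n : ℕ) :
    (Polynomial.bernoulli n).comp (1 - Polynomial.X) = (-1 : Polynomial ℚ) ^ n * Polynomial.bernoulli n := by
  induction n with
  | zero => simp [Polynomial.bernoulli_zero]
  | succ n ih =>
    set p : Polynomial ℚ := (Polynomial.bernoulli (n+1)).comp (1 - Polynomial.X)
      - (-1)^(n+1) * Polynomial.bernoulli (n+1) with hp
    have hd : Polynomial.derivative p = 0 := by
      rw [hp, Polynomial.derivative_sub, Polynomial.derivative_comp,
        Polynomial.derivative_bernoulli_add_one, Polynomial.derivative_mul]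
      simp only [Polynomial.derivative_sub, Polynomial.derivative_one, Polynomial.derivative_X,
        zero_sub, Polynomial.mul_comp, Polynomial.natCast_comp, Polynomial.add_comp,
        Polynomial.one_comp, ih]
      have h1 : Polynomial.derivative ((-1 : Polynomial ℚ)^(n+1)) = 0 := by
        rw [show ((-1 : Polynomial ℚ))^(n+1) = Polynomial.C ((-1 : ℚ)^(n+1)) by
          rw [map_pow, map_neg, map_one]]
        exact Polynomial.derivative_C
      have h2 : Polynomial.derivative (Polynomial.bernoulli (n+1)) =
          ((n : Polynomial ℚ)+1) * Polynomial.bernoulli n := by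
        exact_mod_cast Polynomial.derivative_bernoulli_add_one n
      rw [h1, h2]
      ring
    have hdeg : p.natDegree = 0 := Polynomial.natDegree_eq_zero_of_derivative_eq_zero hd
    have hC : p = Polynomial.C (p.coeff 0) := Polynomial.eq_C_of_natDegree_eq_zero hdeg
    have he : p.eval 0 = 0 := by
      rw [hp]
      simp [Polynomial.eval_comp, Polynomial.bernoulli_eval_one, Polynomial.bernoulli_eval_zero,
        bernoulli'_eq_bernoulli]
    have hz : p = 0 := by
      rw [hC] at he ⊢; simpa using he
    exact sub_eq_zero.mp hz

section
variable (μ : ℝ)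

lemma ev_eq {f g : ℝ → ℝ} (h : ∀ y, 0 < y + μ → f y = g y) {x : ℝ} (hx : 0 < x + μ) :
    f =ᶠ[nhds x] g := by
  have hopen : IsOpen {y : ℝ | 0 < y + μ} :=
    isOpen_lt continuous_const (continuous_id.add continuous_const)
  exact Filter.eventuallyEq_of_mem (hopen.mem_nhds hx) h

lemma hasDeriv_zpow' (m : ℤ) {x : ℝ} (hx : 0 < x + μ) :
    HasDerivAt (fun y => (y + μ) ^ m) ((m : ℝ) * (x + μ) ^ (m - 1)) x := by
  have h := hasDerivAt_zpow m (x + μ) (Or.inl (ne_of_gt hx))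
  have h2 := (hasDerivAt_id x).add_const μ
  simpa [Function.comp_def] using h.comp x h2

lemma iterA (c : ℝ) (m : ℤ) (k : ℕ) : ∀ x : ℝ, 0 < x + μ →
    iteratedDeriv k (fun y => c * (y + μ) ^ m) x
      = c * (∏ i ∈ Finset.range k, ((m : ℝ) - i)) * (x + μ) ^ (m - k) := by
  induction k generalizing c m with
  | zero => intro x hx; simp
  | succ k ih =>
    intro x hx
    rw [iteratedDeriv_succ']
    have h1 : (deriv fun y => c * (y + μ) ^ m) =ᶠ[nhds x]
        (fun y => (c * m) * (y + μ) ^ (m - 1)) := by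
      refine ev_eq μ (fun y hy => ?_) hx
      rw [((hasDeriv_zpow' μ m hy).const_mul c).deriv]
      ring
    rw [h1.iteratedDeriv_eq k, ih (c * m) (m - 1) x hx]
    have he : m - 1 - (k : ℤ) = m - ((k : ℕ) + 1 : ℕ) := by push_cast; ring
    have hprod : ∏ i ∈ Finset.range (k + 1), ((m : ℝ) - i)
        = (m : ℝ) * ∏ i ∈ Finset.range k, (((m - 1 : ℤ) : ℝ) - i) := by
      rw [Finset.prod_range_succ',
        Finset.prod_congr rfl (fun i _ =>
          show (m : ℝ) - ((i + 1 : ℕ) : ℝ) = ((m - 1 : ℤ) : ℝ) - i by push_cast; ring)]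
      push_cast
      ring
    rw [he, hprod]
    ring

lemma iterLog (c : ℝ) (k : ℕ) : ∀ x : ℝ, 0 < x + μ →
    iteratedDeriv (k + 1) (fun y => c * Real.log (y + μ)) x
      = c * (∏ i ∈ Finset.range k, ((-1 : ℝ) - i)) * (x + μ) ^ (-1 - k : ℤ) := by
  intro x hx
  rw [iteratedDeriv_succ']
  have h1 : (deriv fun y => c * Real.log (y + μ)) =ᶠ[nhds x]
      (fun y => c * (y + μ) ^ (-1 : ℤ)) := by
    refine ev_eq μ (fun y hy => ?_) hx
    have hl : HasDerivAt (fun y : ℝ => Real.log (y + μ)) (y + μ)⁻¹ y := by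
      simpa [Function.comp_def] using (Real.hasDerivAt_log (ne_of_gt hy)).comp y ((hasDerivAt_id y).add_const μ)
    rw [(hl.const_mul c).deriv, zpow_neg_one]
  rw [h1.iteratedDeriv_eq k]
  have := iterA μ c (-1) k x hx
  rw [this]
  norm_num

lemma iterVneg (k : ℕ) : ∀ x : ℝ, 0 < x + μ →
    iteratedDeriv (k + 1) (fun y => (y + μ) * Real.log (y + μ) - (y + μ)) x
      = iteratedDeriv k (fun y => Real.log (y + μ)) x := by
  intro x hx
  rw [iteratedDeriv_succ']
  refine Filter.EventuallyEq.iteratedDeriv_eq k ?_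
  refine ev_eq μ (fun y hy => ?_) hx
  have h1 : HasDerivAt (fun y : ℝ => y + μ) 1 y := (hasDerivAt_id y).add_const μ
  have hl : HasDerivAt (fun y : ℝ => Real.log (y + μ)) (y + μ)⁻¹ y := by
    simpa [Function.comp_def] using (Real.hasDerivAt_log (ne_of_gt hy)).comp y ((hasDerivAt_id y).add_const μ)
  have h2 : HasDerivAt (fun y : ℝ => (y + μ) * Real.log (y + μ) - (y + μ))
      (1 * Real.log (y + μ) + (y + μ) * (y + μ)⁻¹ - 1) y := (h1.mul hl).sub h1
  rw [h2.deriv]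
  field_simp
  ring

lemma prod_desc (m k : ℕ) (hm : 1 ≤ m) :
    ∏ i ∈ Finset.range k, ((-(m : ℝ)) - i)
      = (-1) ^ k * ((m + k - 1).factorial : ℝ) / ((m - 1).factorial : ℝ) := by
  induction k with
  | zero => simp [Nat.factorial_ne_zero]
  | succ k ih =>
    rw [Finset.prod_range_succ, ih]
    have h1 : m + (k + 1) - 1 = (m + k - 1) + 1 := by omega
    rw [h1, Nat.factorial_succ]
    have h2 : ((m + k - 1 : ℕ) : ℝ) + 1 = (m : ℝ) + k := by
      have : m + k - 1 + 1 = m + k := by omega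
      have := congrArg (fun a : ℕ => (a : ℝ)) this
      push_cast at this ⊢
      linarith
    push_cast
    rw [h2]
    field_simp
    ring

end
lemma refl_aeval (s : ℝ) (j : ℕ) :
    Polynomial.aeval (1 - s) (Polynomial.bernoulli j)
      = (-1 : ℝ) ^ j * Polynomial.aeval s (Polynomial.bernoulli j) := by
  have h := congrArg (Polynomial.aeval s) (bern_reflect j)
  rw [Polynomial.aeval_comp] at h
  simpa using h

lemma bern_key (s : ℝ) (n : ℕ) :
    ∑ j ∈ Finset.range (n + 1),
        (-1 : ℝ) ^ j * ((n + 1).choose j : ℝ) * Polynomial.aeval s (Polynomial.bernoulli j)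
      = (n + 1) * (1 - s) ^ n := by
  have h := congrArg (Polynomial.aeval (1 - s) : Polynomial ℚ →ₐ[ℚ] ℝ) (Polynomial.sum_bernoulli n)
  rw [map_sum] at h
  simp only [Polynomial.aeval_monomial, map_natCast] at h
  rw [show ((algebraMap ℚ ℝ) ((n:ℚ) + 1)) = (n : ℝ) + 1 by push_cast; simp] at h
  calc ∑ j ∈ Finset.range (n + 1),
        (-1 : ℝ) ^ j * ((n + 1).choose j : ℝ) * Polynomial.aeval s (Polynomial.bernoulli j)
      = ∑ j ∈ Finset.range (n + 1),
        Polynomial.aeval (1 - s) (((n + 1).choose j : ℚ) • Polynomial.bernoulli j) := by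
        refine Finset.sum_congr rfl (fun j _ => ?_)
        rw [map_smul, refl_aeval, Rat.smul_def]
        push_cast
        ring
    _ = (n + 1) * (1 - s) ^ n := by rw [h]

lemma aeval_bern_zero (s : ℝ) : Polynomial.aeval s (Polynomial.bernoulli 0) = 1 := by
  simp [Polynomial.bernoulli_zero]

lemma aeval_bern_one (s : ℝ) : Polynomial.aeval s (Polynomial.bernoulli 1) = s - 1/2 := by
  simp [Polynomial.bernoulli, Finset.sum_range_succ, Polynomial.aeval_monomial, bernoulli_one]
  ring

lemma core (s : ℝ) (N : ℕ) :
    ∑ k ∈ Finset.Icc 1 N,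
        (-1 : ℝ) ^ k * ((N + 2).choose k : ℝ) * Polynomial.aeval s (Polynomial.bernoulli (N + 2 - k))
      = (-1 : ℝ) ^ N * (((N : ℝ) + 2) * (1 - s) ^ (N + 1) - 1 + ((N : ℝ) + 2) * (s - 1/2)) := by
  set f : ℕ → ℝ := fun j => (-1 : ℝ) ^ j * ((N + 2).choose j : ℝ) *
    Polynomial.aeval s (Polynomial.bernoulli j) with hf
  have hkey : ∑ j ∈ Finset.range (N + 2), f j = ((N : ℝ) + 2) * (1 - s) ^ (N + 1) := by
    have h0 := bern_key s (N + 1)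
    simp only [show N + 1 + 1 = N + 2 from rfl] at h0
    push_cast at h0
    simp only [hf]
    push_cast
    linear_combination h0
  have hsplit : ∑ j ∈ Finset.range (N + 2), f j
      = (∑ i ∈ Finset.range N, f (i + 2)) + f 1 + f 0 := by
    rw [Finset.sum_range_succ' f (N + 1), Finset.sum_range_succ' (fun i => f (i + 1)) N]
  have hf0 : f 0 = 1 := by simp [hf, aeval_bern_zero]
  have hf1 : f 1 = -(((N : ℝ) + 2) * (s - 1/2)) := by
    simp [hf, aeval_bern_one]
    push_cast
    ring
  have hrefl : ∑ i ∈ Finset.range N, f (i + 2) = ∑ i ∈ Finset.range N, f (N + 1 - i) := by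
    rw [← Finset.sum_range_reflect (fun i => f (i + 2)) N]
    refine Finset.sum_congr rfl (fun i hi => ?_)
    rw [Finset.mem_range] at hi
    congr 1
    omega
  have hterm : ∀ i ∈ Finset.range N, f (N + 1 - i)
      = (-1 : ℝ) ^ N * ((-1 : ℝ) ^ (i + 1) * ((N + 2).choose (i + 1) : ℝ) *
          Polynomial.aeval s (Polynomial.bernoulli (N + 2 - (i + 1)))) := by
    intro i hi
    rw [Finset.mem_range] at hi
    have h1 : N + 2 - (i + 1) = N + 1 - i := by omega
    have h2 : (N + 2).choose (N + 1 - i) = (N + 2).choose (i + 1) := by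
      rw [show N + 1 - i = N + 2 - (i + 1) by omega]
      exact Nat.choose_symm (by omega)
    have h3 : (-1 : ℝ) ^ (N + 1 - i) = (-1 : ℝ) ^ N * (-1 : ℝ) ^ (i + 1) := by
      have h4 : (-1 : ℝ) ^ (N + 1 - i) * (-1 : ℝ) ^ (i + 1) = (-1 : ℝ) ^ (N + 2) := by
        rw [← pow_add]
        congr 1
        omega
      have h5 : (-1 : ℝ) ^ (i + 1) * (-1 : ℝ) ^ (i + 1) = 1 := by
        rw [← pow_add, ← two_mul, pow_mul]
        norm_num
      calc (-1 : ℝ) ^ (N + 1 - i) = (-1 : ℝ) ^ (N + 1 - i) * ((-1 : ℝ) ^ (i + 1) * (-1 : ℝ) ^ (i + 1)) := by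
            rw [h5, mul_one]
        _ = (-1 : ℝ) ^ (N + 2) * (-1 : ℝ) ^ (i + 1) := by rw [← mul_assoc, h4]
        _ = (-1 : ℝ) ^ N * (-1 : ℝ) ^ (i + 1) := by
            rw [pow_add]
            norm_num
    rw [hf]
    simp only [h1, h2, h3]
    ring
  have hicc : ∑ k ∈ Finset.Icc 1 N,
      (-1 : ℝ) ^ k * ((N + 2).choose k : ℝ) * Polynomial.aeval s (Polynomial.bernoulli (N + 2 - k))
      = ∑ i ∈ Finset.range N, (-1 : ℝ) ^ (i + 1) * ((N + 2).choose (i + 1) : ℝ) *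
          Polynomial.aeval s (Polynomial.bernoulli (N + 2 - (i + 1))) := by
    rw [show Finset.Icc 1 N = Finset.Ico 1 (N + 1) by rw [Finset.Ico_add_one_right_eq_Icc],
      Finset.sum_Ico_eq_sum_range]
    simp only [Nat.add_sub_cancel]
    exact Finset.sum_congr rfl (fun i _ => by rw [add_comm 1 i])
  rw [hicc]
  have hs2 := Finset.sum_congr rfl hterm
  rw [hrefl, hs2, ← Finset.mul_sum] at hsplit
  rw [hkey, hf0, hf1] at hsplit
  have hNsq : (-1 : ℝ) ^ N * (-1 : ℝ) ^ N = 1 := by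
    rw [← pow_add, ← two_mul, pow_mul]; norm_num
  set S : ℝ := ∑ i ∈ Finset.range N, (-1 : ℝ) ^ (i + 1) * ((N + 2).choose (i + 1) : ℝ) *
      Polynomial.aeval s (Polynomial.bernoulli (N + 2 - (i + 1))) with hS
  linear_combination (-(-1 : ℝ) ^ N) * hsplit - S * hNsq
lemma coeff_id (N k : ℕ) (hk1 : 1 ≤ k) (hkN : k ≤ N) (B : ℝ) :
    1 / ((k.factorial : ℝ)) * (B / (((N + 1 - k : ℕ) : ℝ) * (((N + 1 - k : ℕ) : ℝ) + 1))) *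
        ((-1 : ℝ) ^ k * (N.factorial : ℝ) / (((N + 1 - k - 1 : ℕ).factorial : ℝ)))
      = (-1 : ℝ) ^ k * (((N + 2).choose k : ℝ)) * B / (((N : ℝ) + 1) * ((N : ℝ) + 2)) := by
  have hch : ((N + 2).choose k : ℝ) * (k.factorial : ℝ) * (((N + 2 - k).factorial : ℝ))
      = ((N + 2).factorial : ℝ) := by
    exact_mod_cast congrArg (fun a : ℕ => (a : ℝ))
      (Nat.choose_mul_factorial_mul_factorial (show k ≤ N + 2 by omega))
  have e1 : ((N + 2).factorial : ℝ) = ((N : ℝ) + 2) * ((N : ℝ) + 1) * (N.factorial : ℝ) := by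
    rw [show N + 2 = (N + 1) + 1 from rfl, Nat.factorial_succ, Nat.factorial_succ]
    push_cast; ring
  have e2 : (((N + 2 - k).factorial : ℝ))
      = ((((N + 1 - k : ℕ) : ℝ)) + 1) * (((N + 1 - k : ℕ) : ℝ)) * (((N - k).factorial : ℝ)) := by
    rw [show N + 2 - k = ((N - k) + 1) + 1 by omega, Nat.factorial_succ, Nat.factorial_succ,
      show N + 1 - k = (N - k) + 1 by omega]
    push_cast; ring
  have e3 : N + 1 - k - 1 = N - k := by omega
  rw [e3]
  have hm : (0 : ℝ) < ((N + 1 - k : ℕ) : ℝ) := by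
    have : 0 < N + 1 - k := by omega
    exact_mod_cast this
  have h1 : (k.factorial : ℝ) ≠ 0 := by exact_mod_cast Nat.factorial_ne_zero k
  have h2 : ((N - k).factorial : ℝ) ≠ 0 := by exact_mod_cast Nat.factorial_ne_zero _
  have h3 : ((N + 1 - k : ℕ) : ℝ) ≠ 0 := ne_of_gt hm
  have h4 : ((N + 1 - k : ℕ) : ℝ) + 1 ≠ 0 := by positivity
  have h5 : ((N : ℝ) + 1) ≠ 0 := by positivity
  have h6 : ((N : ℝ) + 2) ≠ 0 := by positivity
  rw [e1, e2] at hch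
  field_simp
  linear_combination (-B) * hch

lemma prod_neg_one (N : ℕ) :
    ∏ i ∈ Finset.range N, ((-1 : ℝ) - i) = (-1) ^ N * (N.factorial : ℝ) := by
  induction N with
  | zero => simp
  | succ N ih =>
    rw [Finset.prod_range_succ, ih, Nat.factorial_succ]
    push_cast
    ring

lemma final_num (t : ℝ) (N : ℕ) :
    (-1 : ℝ) ^ N * (((N : ℝ) + 2) * (1 - (t + 1) / 2) ^ (N + 1) - 1
        + ((N : ℝ) + 2) * ((t + 1) / 2 - 1 / 2)) / (((N : ℝ) + 1) * ((N : ℝ) + 2))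
      + 1 / (((N + 1).factorial : ℝ)) * (-(t / 2)) * ((-1 : ℝ) ^ N * (N.factorial : ℝ))
      + 1 / (((N + 2).factorial : ℝ)) * ((-1 : ℝ) ^ N * (N.factorial : ℝ))
      = ((1 - t) / 2) ^ (N + 1) / (((N + 1).factorial : ℝ)) * ((-1 : ℝ) ^ N * (N.factorial : ℝ)) := by
  rw [show N + 2 = (N + 1) + 1 from rfl, Nat.factorial_succ (N + 1), Nat.factorial_succ N]
  have h0 : (N.factorial : ℝ) ≠ 0 := by exact_mod_cast Nat.factorial_ne_zero N
  have h5 : ((N : ℝ) + 1) ≠ 0 := by positivity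
  have h6 : ((N : ℝ) + 2) ≠ 0 := by positivity
  have hb : (1 - (t + 1) / 2) = (1 - t) / 2 := by ring
  rw [hb]
  push_cast
  field_simp
  ring

theorem stmt4 (t μ : ℝ) (V : ℤ → ℝ → ℝ)
    (hVneg : ∀ l : ℝ, 0 < l + μ →
      V (-1) l = (l + μ) * Real.log (l + μ) - (l + μ))
    (hV0 : ∀ l : ℝ, 0 < l + μ → V 0 l = -(t / 2) * Real.log (l + μ))
    (hVm : ∀ m : ℕ, 1 ≤ m → ∀ l : ℝ, 0 < l + μ →
      V (m : ℤ) l = Polynomial.aeval ((t + 1) / 2) (Polynomial.bernoulli (m + 1))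
          / ((m : ℝ) * ((m : ℝ) + 1)) * (l + μ) ^ (-(m : ℤ)))
    (n : ℕ) (l : ℝ) (hl : 0 < l + μ) :
    ∑ k ∈ Finset.Icc 1 (n + 1),
        1 / (Nat.factorial k : ℝ) * iteratedDeriv k (V ((n : ℤ) - (k : ℤ))) l
      = ((1 - t) / 2) ^ n / (Nat.factorial n : ℝ)
          * iteratedDeriv n (fun x => Real.log (x + μ)) l := by
  have hlog1 : (fun y : ℝ => Real.log (y + μ)) = (fun y => 1 * Real.log (y + μ)) := by
    funext y; ring
  cases n with
  | zero =>
    rw [show Finset.Icc 1 (0 + 1) = {1} from rfl, Finset.sum_singleton]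
    rw [show ((0 : ℕ) : ℤ) - ((1 : ℕ) : ℤ) = -1 by norm_num]
    have hev : V (-1) =ᶠ[nhds l] fun y => (y + μ) * Real.log (y + μ) - (y + μ) :=
      ev_eq μ hVneg hl
    rw [hev.iteratedDeriv_eq 1, iterVneg μ 0 l hl, iteratedDeriv_zero]
    norm_num
  | succ N =>
    rw [Finset.sum_Icc_succ_top (show 1 ≤ N + 1 + 1 by omega),
      Finset.sum_Icc_succ_top (show 1 ≤ N + 1 by omega)]
    -- k = N + 2 piece
    have p3 : iteratedDeriv (N + 1 + 1) (V (((N + 1 : ℕ) : ℤ) - ((N + 1 + 1 : ℕ) : ℤ))) l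
        = (∏ i ∈ Finset.range N, ((-1 : ℝ) - i)) * (l + μ) ^ (-1 - (N : ℤ)) := by
      rw [show ((N + 1 : ℕ) : ℤ) - ((N + 1 + 1 : ℕ) : ℤ) = -1 by push_cast; ring]
      have hev : V (-1) =ᶠ[nhds l] fun y => (y + μ) * Real.log (y + μ) - (y + μ) :=
        ev_eq μ hVneg hl
      rw [hev.iteratedDeriv_eq, iterVneg μ (N + 1) l hl, hlog1, iterLog μ 1 N l hl]
      ring
    -- k = N + 1 piece
    have p2 : iteratedDeriv (N + 1) (V (((N + 1 : ℕ) : ℤ) - ((N + 1 : ℕ) : ℤ))) l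
        = -(t / 2) * (∏ i ∈ Finset.range N, ((-1 : ℝ) - i)) * (l + μ) ^ (-1 - (N : ℤ)) := by
      rw [show ((N + 1 : ℕ) : ℤ) - ((N + 1 : ℕ) : ℤ) = 0 by ring]
      have hev : V 0 =ᶠ[nhds l] fun y => -(t / 2) * Real.log (y + μ) := ev_eq μ hV0 hl
      rw [hev.iteratedDeriv_eq, iterLog μ (-(t / 2)) N l hl]
    -- middle sum
    have p1 : ∑ k ∈ Finset.Icc 1 N,
          1 / (Nat.factorial k : ℝ) * iteratedDeriv k (V (((N + 1 : ℕ) : ℤ) - (k : ℤ))) l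
        = (∑ k ∈ Finset.Icc 1 N, (-1 : ℝ) ^ k * ((N + 2).choose k : ℝ) *
            Polynomial.aeval ((t + 1) / 2) (Polynomial.bernoulli (N + 2 - k)))
            / (((N : ℝ) + 1) * ((N : ℝ) + 2)) * (l + μ) ^ (-1 - (N : ℤ)) := by
      rw [Finset.sum_div, Finset.sum_mul]
      refine Finset.sum_congr rfl (fun k hk => ?_)
      rw [Finset.mem_Icc] at hk
      set m : ℕ := N + 1 - k with hm
      have hm1 : 1 ≤ m := by omega
      have hc1 : ((N + 1 : ℕ) : ℤ) - (k : ℤ) = ((m : ℕ) : ℤ) := by omega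
      have hev : V ((m : ℕ) : ℤ) =ᶠ[nhds l]
          fun y => Polynomial.aeval ((t + 1) / 2) (Polynomial.bernoulli (m + 1))
            / ((m : ℝ) * ((m : ℝ) + 1)) * (y + μ) ^ (-(m : ℤ)) :=
        ev_eq μ (hVm m hm1) hl
      rw [hc1, hev.iteratedDeriv_eq, iterA μ _ (-(m : ℤ)) k l hl]
      have hprod : ∏ i ∈ Finset.range k, (((-(m : ℤ) : ℤ) : ℝ) - i)
          = ∏ i ∈ Finset.range k, ((-(m : ℝ)) - i) := by
        refine Finset.prod_congr rfl (fun i _ => ?_)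
        push_cast
        ring
      rw [hprod, prod_desc m k hm1, show m + k - 1 = N by omega, show m - 1 = N + 1 - k - 1 by omega,
        show (-(m : ℤ) - (k : ℕ)) = -1 - (N : ℤ) by omega]
      rw [show m + 1 = N + 2 - k by omega]
      have := coeff_id N k hk.1 hk.2
        (Polynomial.aeval ((t + 1) / 2) (Polynomial.bernoulli (N + 2 - k)))
      rw [show (m : ℝ) = ((N + 1 - k : ℕ) : ℝ) from rfl]
      linear_combination (l + μ) ^ (-1 - (N : ℤ)) * this
    rw [p1, p2, p3, hlog1, iterLog μ 1 N l hl, core ((t + 1) / 2) N, prod_neg_one]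
    have hfin := final_num t N
    rw [show (N + 1) + 1 = N + 2 from rfl]
    push_cast
    linear_combination (l + μ) ^ (-1 - (N : ℤ)) * hfin
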